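/- arXiv:1404.1193 — 11 statements merged into one kernel-verified Lean document; each statement's English description precedes it below -/
import Mathlib

section
/- The greedy policy x_i* = min{c_i, (∑_{j=1}^{i} T_j) − ∑_{j=1}^{i−1} x_j*} for i = 1,…,N is an optimal solution to the linear program: minimize α∑_{i=1}^N c_i − (α−β)∑_{i=1}^N x_i subject to 0 ≤ x_i ≤ c_i for all i and ∑_{i=1}^k x_i ≤ ∑_{i=1}^k T_i for all k ∈ {1,…,N}. -/
/-- The greedy policy is an optimal solution of the cumulative-constraint linear program. -/
theorem greedy_optimal_LP (N : ℕ) (hN : 0 < N) (α β : ℝ) (hαβ : β ≤ α)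
    (c T : ℕ → ℝ) (hc : ∀ i, 0 ≤ c i) (hT : ∀ i, 0 ≤ T i)
    (xs : ℕ → ℝ)
    (hxs : ∀ i, xs i = min (c i)
      ((∑ j ∈ Finset.range (i+1), T j) - ∑ j ∈ Finset.range i, xs j)) :
    (∀ i < N, 0 ≤ xs i ∧ xs i ≤ c i) ∧
    (∀ k ≤ N, ∑ i ∈ Finset.range k, xs i ≤ ∑ i ∈ Finset.range k, T i) ∧
    (∀ x : ℕ → ℝ, (∀ i < N, 0 ≤ x i ∧ x i ≤ c i) →
      (∀ k ≤ N, ∑ i ∈ Finset.range k, x i ≤ ∑ i ∈ Finset.range k, T i) →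
      α * ∑ i ∈ Finset.range N, c i - (α - β) * ∑ i ∈ Finset.range N, xs i ≤
        α * ∑ i ∈ Finset.range N, c i - (α - β) * ∑ i ∈ Finset.range N, x i) := by
  have key : ∀ k, ∑ j ∈ Finset.range k, xs j ≤ ∑ j ∈ Finset.range k, T j := by
    intro k
    induction k with
    | zero => simp
    | succ k ih =>
      have h1 : xs k ≤ (∑ j ∈ Finset.range (k+1), T j) - ∑ j ∈ Finset.range k, xs j := by
        rw [hxs k]; exact min_le_right _ _
      rw [Finset.sum_range_succ xs k]
      linarith
  have nonneg : ∀ i, 0 ≤ xs i := by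
    intro i
    rw [hxs i]
    refine le_min (hc i) ?_
    have := key i
    have hTi := hT i
    rw [Finset.sum_range_succ T i]
    linarith
  have hle : ∀ i, xs i ≤ c i := by
    intro i; rw [hxs i]; exact min_le_left _ _
  refine ⟨fun i _ => ⟨nonneg i, hle i⟩, fun k _ => key k, ?_⟩
  intro x hx hxk
  have dom : ∀ k, k ≤ N → ∑ i ∈ Finset.range k, x i ≤ ∑ i ∈ Finset.range k, xs i := by
    intro k
    induction k with
    | zero => simp
    | succ k ih =>
      intro hk
      have ih' := ih (Nat.le_of_succ_le hk)
      rcases le_or_gt (c k) ((∑ j ∈ Finset.range (k+1), T j) - ∑ j ∈ Finset.range k, xs j)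
        with h | h
      · have hxsk : xs k = c k := by rw [hxs k]; exact min_eq_left h
        have hxck := (hx k (lt_of_lt_of_le (Nat.lt_succ_self k) hk)).2
        rw [Finset.sum_range_succ x k, Finset.sum_range_succ xs k, hxsk]
        linarith
      · have hxsk : xs k = (∑ j ∈ Finset.range (k+1), T j) - ∑ j ∈ Finset.range k, xs j := by
          rw [hxs k]; exact min_eq_right (le_of_lt h)
        have hfeas := hxk (k+1) hk
        rw [Finset.sum_range_succ x k] at hfeas
        rw [Finset.sum_range_succ x k, Finset.sum_range_succ xs k, hxsk]
        linarith
  have := dom N le_rfl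
  nlinarith [this, sub_nonneg.mpr hαβ]
end

section
/- Among all feasible points of the cumulative-constraint linear program, the greedy policy maximizes every partial sum: for every k ∈ {1,…,N} and every feasible x, ∑_{i=1}^k x_i ≤ ∑_{i=1}^k x_i*. -/
/-- Among all feasible points, the greedy policy maximizes every partial sum. -/
theorem greedy_maximizes_partial_sums (N : ℕ) (hN : 0 < N)
    (c T : ℕ → ℝ) (hc : ∀ i, 0 ≤ c i) (hT : ∀ i, 0 ≤ T i)
    (xs : ℕ → ℝ)
    (hxs : ∀ i, xs i = min (c i)
      ((∑ j ∈ Finset.range (i+1), T j) - ∑ j ∈ Finset.range i, xs j))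
    (x : ℕ → ℝ) (hfeas : ∀ i < N, 0 ≤ x i ∧ x i ≤ c i)
    (hcum : ∀ k ≤ N, ∑ i ∈ Finset.range k, x i ≤ ∑ i ∈ Finset.range k, T i) :
    ∀ k ≤ N, ∑ i ∈ Finset.range k, x i ≤ ∑ i ∈ Finset.range k, xs i := by
  intro k hk
  induction k with
  | zero => simp
  | succ k ih =>
    have hk' : k ≤ N := Nat.le_of_succ_le hk
    have IH := ih hk'
    rw [Finset.sum_range_succ, Finset.sum_range_succ]
    rcases le_or_gt (c k) ((∑ j ∈ Finset.range (k+1), T j) - ∑ j ∈ Finset.range k, xs j) with h | h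
    · have hx : xs k = c k := by rw [hxs k, min_eq_left h]
      have := (hfeas k (Nat.lt_of_succ_le hk)).2
      linarith
    · have hx : xs k = (∑ j ∈ Finset.range (k+1), T j) - ∑ j ∈ Finset.range k, xs j := by
        rw [hxs k, min_eq_right h.le]
      have hc1 := hcum (k+1) hk
      rw [Finset.sum_range_succ] at hc1
      linarith
end

section
/- At any optimal solution of the energy cost minimization problem with outage constraint, the number of outage slots equals ⌊Nε⌋, i.e., the outage constraint is used to its full extent, provided ⌊Nε⌋ ≥ 1, all channel inversion powers are strictly positive, and α, β > 0. -/
open scoped Classical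

/-- At any optimal solution, the number of outage slots equals ⌊Nε⌋. -/
theorem optimal_uses_full_outage_budget (N : ℕ) (hN : 0 < N) (ε : ℝ)
    (hε0 : 0 ≤ ε) (hε1 : ε ≤ 1)
    (α β : ℝ) (hβ : 0 < β) (hαβ : β < α)
    (pinv T : ℕ → ℝ) (hpinv : ∀ i < N, 0 < pinv i) (hT : ∀ i, 0 ≤ T i)
    (hbudget : 1 ≤ ⌊(N : ℝ) * ε⌋₊)
    (pc pr : ℕ → ℝ)
    (hpc : ∀ i, 0 ≤ pc i) (hpr : ∀ i, 0 ≤ pr i)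
    (hcum : ∀ k ≤ N, ∑ i ∈ Finset.range k, pr i ≤ ∑ i ∈ Finset.range k, T i)
    (hout : ((Finset.range N).filter (fun i => pc i + pr i < pinv i)).card ≤ ⌊(N : ℝ) * ε⌋₊)
    (hopt : ∀ qc qr : ℕ → ℝ, (∀ i, 0 ≤ qc i) → (∀ i, 0 ≤ qr i) →
      (∀ k ≤ N, ∑ i ∈ Finset.range k, qr i ≤ ∑ i ∈ Finset.range k, T i) →
      ((Finset.range N).filter (fun i => qc i + qr i < pinv i)).card ≤ ⌊(N : ℝ) * ε⌋₊ →
      ∑ i ∈ Finset.range N, (α * pc i + β * pr i) ≤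
        ∑ i ∈ Finset.range N, (α * qc i + β * qr i)) :
    ((Finset.range N).filter (fun i => pc i + pr i < pinv i)).card = ⌊(N : ℝ) * ε⌋₊ := by
  set S := (Finset.range N).filter (fun i => pc i + pr i < pinv i) with hS
  by_contra hne
  have hlt : S.card < ⌊(N : ℝ) * ε⌋₊ := lt_of_le_of_ne hout hne
  -- there is a non-outage slot j
  have hSsub : S ⊆ Finset.range N := Finset.filter_subset _ _
  have hSne : S ≠ Finset.range N := by
    intro h
    have hcardN : S.card = N := by rw [h, Finset.card_range]
    have hbN : ⌊(N : ℝ) * ε⌋₊ ≤ N := by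
      have : (N : ℝ) * ε ≤ N := by nlinarith
      calc ⌊(N : ℝ) * ε⌋₊ ≤ ⌊(N : ℝ)⌋₊ := Nat.floor_le_floor this
        _ = N := Nat.floor_natCast N
    omega
  obtain ⟨j, hjN, hjS⟩ : ∃ j ∈ Finset.range N, j ∉ S := by
    by_contra h
    push_neg at h
    exact hSne (Finset.Subset.antisymm hSsub h)
  have hjlt : j < N := Finset.mem_range.mp hjN
  have hjout : ¬ (pc j + pr j < pinv j) := by
    intro h; exact hjS (Finset.mem_filter.mpr ⟨hjN, h⟩)
  -- modified policy
  set qc : ℕ → ℝ := fun i => if i = j then 0 else pc i with hqc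
  set qr : ℕ → ℝ := fun i => if i = j then 0 else pr i with hqr
  have hqc0 : ∀ i, 0 ≤ qc i := by
    intro i; simp only [hqc]; split <;> simp [hpc i]
  have hqr0 : ∀ i, 0 ≤ qr i := by
    intro i; simp only [hqr]; split <;> simp [hpr i]
  have hqcum : ∀ k ≤ N, ∑ i ∈ Finset.range k, qr i ≤ ∑ i ∈ Finset.range k, T i := by
    intro k hk
    refine le_trans (Finset.sum_le_sum fun i _ => ?_) (hcum k hk)
    simp only [hqr]; split <;> simp [hpr i]
  have hqout : ((Finset.range N).filter (fun i => qc i + qr i < pinv i)).card ≤ ⌊(N : ℝ) * ε⌋₊ := by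
    have hsub : (Finset.range N).filter (fun i => qc i + qr i < pinv i) ⊆ insert j S := by
      intro i hi
      rcases Finset.mem_filter.mp hi with ⟨hiN, hicond⟩
      by_cases hij : i = j
      · exact Finset.mem_insert.mpr (Or.inl hij)
      · refine Finset.mem_insert.mpr (Or.inr (Finset.mem_filter.mpr ⟨hiN, ?_⟩))
        simpa [hqc, hqr, hij] using hicond
    calc ((Finset.range N).filter (fun i => qc i + qr i < pinv i)).card
        ≤ (insert j S).card := Finset.card_le_card hsub
      _ ≤ S.card + 1 := Finset.card_insert_le _ _
      _ ≤ ⌊(N : ℝ) * ε⌋₊ := by omega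
  have hkey := hopt qc qr hqc0 hqr0 hqcum hqout
  -- cost strictly decreases
  have hcost : ∑ i ∈ Finset.range N, (α * qc i + β * qr i)
      = ∑ i ∈ Finset.range N, (α * pc i + β * pr i) - (α * pc j + β * pr j) := by
    rw [← Finset.add_sum_erase _ _ hjN, ← Finset.add_sum_erase _ (fun i => α * pc i + β * pr i) hjN]
    have h1 : α * qc j + β * qr j = 0 := by simp [hqc, hqr]
    have h2 : ∑ i ∈ (Finset.range N).erase j, (α * qc i + β * qr i)
        = ∑ i ∈ (Finset.range N).erase j, (α * pc i + β * pr i) := by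
      refine Finset.sum_congr rfl fun i hi => ?_
      have hij : i ≠ j := Finset.ne_of_mem_erase hi
      simp [hqc, hqr, hij]
    rw [h1, h2]; ring
  have hpos : 0 < α * pc j + β * pr j := by
    push_neg at hjout
    have hpinvj := hpinv j hjlt
    have hβα : (0:ℝ) < α := lt_trans hβ hαβ
    nlinarith [hpc j, hpr j]
  rw [hcost] at hkey
  linarith
end

section
/- For a fixed set S of outage slots, the greedy power allocation — setting p_i^c = p_i^r = 0 for i ∈ S, and for i ∉ S setting p_i^r = min{p_i^inv, ∑_{j=1}^i T_j − ∑_{j=1}^{i−1} p_j^r} and p_i^c = p_i^inv − p_i^r — minimizes the total cost ∑_i (α p_i^c + β p_i^r) over all feasible allocations that serve every slot not in S (i.e., p_i^c + p_i^r ≥ p_i^inv for i ∉ S) and satisfy the cumulative harvesting constraints. -/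
open scoped Classical

/-- For a fixed outage set `S`, the greedy power allocation minimizes the total cost
among all feasible allocations serving every slot not in `S`. -/
theorem greedy_allocation_optimal_fixed_outage_set (N : ℕ) (hN : 0 < N)
    (α β : ℝ) (hβ : 0 ≤ β) (hαβ : β < α)
    (pinv T : ℕ → ℝ) (hpinv : ∀ i, 0 ≤ pinv i) (hT : ∀ i, 0 ≤ T i)
    (S : Finset ℕ) (hS : S ⊆ Finset.range N)
    (pr : ℕ → ℝ)
    (hpr : ∀ i, pr i = min (if i ∈ S then 0 else pinv i)
      ((∑ j ∈ Finset.range (i+1), T j) - ∑ j ∈ Finset.range i, pr j))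
    (pc : ℕ → ℝ)
    (hpc : ∀ i, pc i = (if i ∈ S then 0 else pinv i) - pr i) :
    ∀ qc qr : ℕ → ℝ, (∀ i, 0 ≤ qc i) → (∀ i, 0 ≤ qr i) →
      (∀ k ≤ N, ∑ i ∈ Finset.range k, qr i ≤ ∑ i ∈ Finset.range k, T i) →
      (∀ i < N, i ∉ S → pinv i ≤ qc i + qr i) →
      ∑ i ∈ Finset.range N, (α * pc i + β * pr i) ≤
        ∑ i ∈ Finset.range N, (α * qc i + β * qr i) := by
  intro qc qr hqc hqr hcum hserve
  set pt : ℕ → ℝ := fun i => if i ∈ S then 0 else pinv i with hpt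
  have hpt0 : ∀ i, 0 ≤ pt i := by
    intro i; simp only [hpt]
    split
    · exact le_refl 0
    · exact hpinv i
  have hB : ∀ i, 0 ≤ (∑ j ∈ Finset.range (i+1), T j) - ∑ j ∈ Finset.range i, pr j := by
    intro i; induction i with
    | zero => simpa using hT 0
    | succ n ih =>
      have h1 : pr n ≤ (∑ j ∈ Finset.range (n+1), T j) - ∑ j ∈ Finset.range n, pr j := by
        rw [hpr n]; exact min_le_right _ _
      rw [Finset.sum_range_succ (f := pr), Finset.sum_range_succ (f := T)]
      have := hT (n+1)
      linarith
  have hpr0 : ∀ i, 0 ≤ pr i := fun i => by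
    rw [hpr i]; exact le_min (hpt0 i) (hB i)
  have hprle : ∀ i, pr i ≤ pt i := fun i => by rw [hpr i]; exact min_le_left _ _
  set r : ℕ → ℝ := fun i => min (qr i) (pt i) with hr
  have hpref : ∀ k ≤ N, ∑ i ∈ Finset.range k, r i ≤ ∑ i ∈ Finset.range k, pr i := by
    intro k hk; induction k with
    | zero => simp
    | succ n ih =>
      have hn : n ≤ N := Nat.le_of_succ_le hk
      have ihn := ih hn
      rcases le_or_gt (pt n) ((∑ j ∈ Finset.range (n+1), T j) - ∑ j ∈ Finset.range n, pr j) with h | h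
      · have hprn : pr n = pt n := by rw [hpr n]; exact min_eq_left h
        have hrn : r n ≤ pr n := by rw [hprn]; exact min_le_right _ _
        rw [Finset.sum_range_succ, Finset.sum_range_succ]; linarith
      · have hprn : pr n = (∑ j ∈ Finset.range (n+1), T j) - ∑ j ∈ Finset.range n, pr j := by
          rw [hpr n]; exact min_eq_right h.le
        have hsum : ∑ i ∈ Finset.range (n+1), pr i = ∑ j ∈ Finset.range (n+1), T j := by
          rw [Finset.sum_range_succ, hprn]; ring
        have h1 : ∑ i ∈ Finset.range (n+1), r i ≤ ∑ i ∈ Finset.range (n+1), qr i :=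
          Finset.sum_le_sum fun i _ => min_le_left _ _
        calc ∑ i ∈ Finset.range (n+1), r i ≤ ∑ i ∈ Finset.range (n+1), qr i := h1
          _ ≤ ∑ j ∈ Finset.range (n+1), T j := hcum (n+1) hk
          _ = ∑ i ∈ Finset.range (n+1), pr i := hsum.symm
  have hslot : ∀ i < N, α * pt i - (α - β) * r i ≤ α * qc i + β * qr i := by
    intro i hi
    have hserve' : pt i ≤ qc i + qr i := by
      simp only [hpt]
      split
      · have := hqc i; have := hqr i; linarith
      · exact hserve i hi ‹_›
    rcases le_or_gt (qr i) (pt i) with h | h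
    · have hri : r i = qr i := min_eq_left h
      rw [hri]
      nlinarith [hqr i]
    · have hri : r i = pt i := min_eq_right h.le
      rw [hri]
      nlinarith [hqc i, hpt0 i]
  have hLHS : ∑ i ∈ Finset.range N, (α * pc i + β * pr i)
      = ∑ i ∈ Finset.range N, (α * pt i - (α - β) * pr i) := by
    apply Finset.sum_congr rfl; intro i _; rw [hpc i]; simp only [hpt]; ring
  rw [hLHS]
  have h2 : ∑ i ∈ Finset.range N, (α * pt i - (α - β) * pr i)
      ≤ ∑ i ∈ Finset.range N, (α * pt i - (α - β) * r i) := by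
    have hp := hpref N le_rfl
    have hh : (α - β) * ∑ i ∈ Finset.range N, r i ≤ (α - β) * ∑ i ∈ Finset.range N, pr i :=
      mul_le_mul_of_nonneg_left hp (by linarith)
    simp only [Finset.sum_sub_distrib, ← Finset.mul_sum]
    linarith
  exact h2.trans (Finset.sum_le_sum fun i hi => hslot i (Finset.mem_range.mp hi))
end

section
/- When exactly one slot must be dropped (⌊Nε⌋ = 1): if there exists a slot k < i with p_k^inv > p_i^inv, then there is an optimal solution in which slot i is not the dropped slot. Equivalently, dropping slot k instead of slot i never increases the minimal total cost. -/
/-- A policy drops exactly the slot `d` and serves every other slot with channel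
inversion power, subject to cumulative harvesting constraints. -/
def DropOneFeasible (N : ℕ) (pinv T : ℕ → ℝ) (d : ℕ) (pc pr : ℕ → ℝ) : Prop :=
  (∀ j, 0 ≤ pc j) ∧ (∀ j, 0 ≤ pr j) ∧
  (∀ m ≤ N, ∑ j ∈ Finset.range m, pr j ≤ ∑ j ∈ Finset.range m, T j) ∧
  (∀ j < N, j ≠ d → pc j + pr j = pinv j) ∧
  pc d = 0 ∧ pr d = 0

private lemma sum_upd (s : Finset ℕ) (f : ℕ → ℝ) (a : ℕ) (ha : a ∈ s) (x : ℝ) :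
    ∑ j ∈ s, Function.update f a x j = ∑ j ∈ s, f j - f a + x := by
  rw [Finset.sum_update_of_mem ha]
  have h := Finset.sum_eq_sum_sdiff_singleton_add ha f
  linarith

private lemma sum_upd2 (s : Finset ℕ) (f : ℕ → ℝ) (a b : ℕ) (ha : a ∈ s) (hb : b ∈ s)
    (hab : a ≠ b) (x y : ℝ) :
    ∑ j ∈ s, Function.update (Function.update f a x) b y j
      = ∑ j ∈ s, f j - f a - f b + x + y := by
  rw [sum_upd s _ b hb y, sum_upd s f a ha x, Function.update_of_ne hab.symm]
  ring

/-- If a slot `k` before slot `i` requires more channel inversion power, then dropping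
slot `k` instead of slot `i` never increases the total cost. -/
theorem drop_earlier_worse_slot (N : ℕ) (α β : ℝ) (hβ : 0 ≤ β) (hαβ : β < α)
    (pinv T : ℕ → ℝ) (hpinv : ∀ j < N, 0 < pinv j) (hT : ∀ j, 0 ≤ T j)
    (k i : ℕ) (hki : k < i) (hiN : i < N) (hworse : pinv i < pinv k) :
    ∀ pc pr : ℕ → ℝ, DropOneFeasible N pinv T i pc pr →
      ∃ qc qr : ℕ → ℝ, DropOneFeasible N pinv T k qc qr ∧
        ∑ j ∈ Finset.range N, (α * qc j + β * qr j) ≤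
          ∑ j ∈ Finset.range N, (α * pc j + β * pr j) := by
  intro pc pr hfeas
  obtain ⟨hpc0, hpr0, hcum, hserve, hpci, hpri⟩ := hfeas
  have hkne : k ≠ i := Nat.ne_of_lt hki
  have hkN : k < N := hki.trans hiN
  set m0 : ℝ := min (pr k) (pinv i) with hm0
  have hm0pr : m0 ≤ pr k := min_le_left _ _
  have hm0pi : m0 ≤ pinv i := min_le_right _ _
  have hm0nn : 0 ≤ m0 := le_min (hpr0 k) (hpinv i hiN).le
  have hprk_le : pr k ≤ pinv k := by
    have := hserve k hkN hkne
    nlinarith [hpc0 k]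
  set qc : ℕ → ℝ := Function.update (Function.update pc k 0) i (pinv i - m0) with hqc
  set qr : ℕ → ℝ := Function.update (Function.update pr k 0) i m0 with hqr
  have hqck : qc k = 0 := by
    simp [hqc, Function.update_of_ne hkne]
  have hqrk : qr k = 0 := by
    simp [hqr, Function.update_of_ne hkne]
  have hqci : qc i = pinv i - m0 := by simp [hqc]
  have hqri : qr i = m0 := by simp [hqr]
  have hqc_other : ∀ j, j ≠ k → j ≠ i → qc j = pc j := by
    intro j hjk hji
    simp [hqc, Function.update_of_ne hji, Function.update_of_ne hjk]
  have hqr_other : ∀ j, j ≠ k → j ≠ i → qr j = pr j := by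
    intro j hjk hji
    simp [hqr, Function.update_of_ne hji, Function.update_of_ne hjk]
  refine ⟨qc, qr, ⟨?_, ?_, ?_, ?_, hqck, hqrk⟩, ?_⟩
  · intro j
    rcases eq_or_ne j i with rfl | hji
    · rw [hqci]; linarith
    rcases eq_or_ne j k with rfl | hjk
    · rw [hqck]
    · rw [hqc_other j hjk hji]; exact hpc0 j
  · intro j
    rcases eq_or_ne j i with rfl | hji
    · rw [hqri]; exact hm0nn
    rcases eq_or_ne j k with rfl | hjk
    · rw [hqrk]
    · rw [hqr_other j hjk hji]; exact hpr0 j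
  · intro m hm
    refine le_trans ?_ (hcum m hm)
    by_cases hkm : k < m
    · have hkmem : k ∈ Finset.range m := Finset.mem_range.2 hkm
      by_cases him : i < m
      · have himem : i ∈ Finset.range m := Finset.mem_range.2 him
        rw [hqr, sum_upd2 _ pr k i hkmem himem hkne]
        rw [hpri]
        linarith
      · have heq : ∑ j ∈ Finset.range m, qr j = ∑ j ∈ Finset.range m,
            Function.update pr k 0 j := by
          refine Finset.sum_congr rfl fun j hj => ?_
          have hji : j ≠ i := by
            intro h; exact him (h ▸ Finset.mem_range.1 hj)
          simp [hqr, Function.update_of_ne hji]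
        rw [heq, sum_upd _ pr k hkmem 0]
        have := hpr0 k
        linarith
    · have heq : ∑ j ∈ Finset.range m, qr j = ∑ j ∈ Finset.range m, pr j := by
        refine Finset.sum_congr rfl fun j hj => ?_
        have hj' := Finset.mem_range.1 hj
        have hjk : j ≠ k := by omega
        have hji : j ≠ i := by omega
        exact hqr_other j hjk hji
      rw [heq]
  · intro j hjN hjk
    rcases eq_or_ne j i with rfl | hji
    · rw [hqci, hqri]; ring
    · rw [hqc_other j hjk hji, hqr_other j hjk hji]
      exact hserve j hjN hji
  · have hkmem : k ∈ Finset.range N := Finset.mem_range.2 hkN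
    have himem : i ∈ Finset.range N := Finset.mem_range.2 hiN
    have hsum : ∀ (u v : ℕ → ℝ), ∑ j ∈ Finset.range N, (α * u j + β * v j)
        = α * ∑ j ∈ Finset.range N, u j + β * ∑ j ∈ Finset.range N, v j := by
      intro u v
      rw [Finset.sum_add_distrib, Finset.mul_sum, Finset.mul_sum]
    rw [hsum, hsum]
    rw [hqc, hqr, sum_upd2 _ pc k i hkmem himem hkne, sum_upd2 _ pr k i hkmem himem hkne]
    have hserve_k := hserve k hkN hkne
    rw [hpci, hpri]
    rcases min_cases (pr k) (pinv i) with ⟨h1, h2⟩ | ⟨h1, h2⟩ <;>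
      · rw [hm0, h1]; nlinarith [hpr0 k]
end

section
/- When ⌊Nε⌋ = M slots may be dropped: if for slot i there exist M distinct slots j_1 < j_2 < … < j_M, all with j_m < i and p_{j_m}^inv > p_i^inv, then there exists an optimal solution in which slot i is kept (not dropped). -/
/-- A policy selects a set `S` of at most `M` dropped slots (zero power there) and serves
the remaining slots with channel inversion power, subject to cumulative harvesting
constraints. -/
def DropSetFeasible (N M : ℕ) (pinv T : ℕ → ℝ) (S : Finset ℕ) (pc pr : ℕ → ℝ) : Prop :=
  S ⊆ Finset.range N ∧ S.card ≤ M ∧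
  (∀ j, 0 ≤ pc j) ∧ (∀ j, 0 ≤ pr j) ∧
  (∀ m ≤ N, ∑ j ∈ Finset.range m, pr j ≤ ∑ j ∈ Finset.range m, T j) ∧
  (∀ j < N, j ∉ S → pc j + pr j = pinv j) ∧
  (∀ j ∈ S, pc j = 0 ∧ pr j = 0)

/-- If there are `M` slots before slot `i`, each requiring more channel inversion power
than slot `i`, then there exists an optimal solution keeping slot `i`. -/
theorem keep_slot_with_M_worse_predecessors (N M : ℕ) (α β : ℝ) (hβ : 0 ≤ β) (hαβ : β < α)
    (pinv T : ℕ → ℝ) (hpinv : ∀ j < N, 0 < pinv j) (hT : ∀ j, 0 ≤ T j)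
    (i : ℕ) (hiN : i < N)
    (J : Finset ℕ) (hJcard : J.card = M) (hJ : ∀ j ∈ J, j < i ∧ pinv i < pinv j)
    (S : Finset ℕ) (pc pr : ℕ → ℝ)
    (hfeas : DropSetFeasible N M pinv T S pc pr)
    (hopt : ∀ S' qc qr, DropSetFeasible N M pinv T S' qc qr →
      ∑ j ∈ Finset.range N, (α * pc j + β * pr j) ≤
        ∑ j ∈ Finset.range N, (α * qc j + β * qr j)) :
    ∃ S' qc qr, DropSetFeasible N M pinv T S' qc qr ∧
      (∀ S'' rc rr, DropSetFeasible N M pinv T S'' rc rr →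
        ∑ j ∈ Finset.range N, (α * qc j + β * qr j) ≤
          ∑ j ∈ Finset.range N, (α * rc j + β * rr j)) ∧
      i ∉ S' := by
  classical
  by_cases hiS : i ∈ S
  · -- swap: drop some k ∈ J \ S instead of i
    obtain ⟨hSsub, hScard, hpc0, hpr0, hcum, hserve, hdrop⟩ := hfeas
    have hiJ : i ∉ J := fun h => absurd (hJ i h).1 (lt_irrefl i)
    have hns : ¬ J ⊆ S := by
      intro hsub
      have hc : (insert i J).card ≤ S.card :=
        Finset.card_le_card (Finset.insert_subset hiS hsub)
      rw [Finset.card_insert_of_notMem hiJ, hJcard] at hc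
      omega
    obtain ⟨k, hkJ, hkS⟩ := Finset.not_subset.mp hns
    obtain ⟨hki, hkpi⟩ := hJ k hkJ
    have hkN : k < N := hki.trans hiN
    have hne : k ≠ i := hki.ne
    have hα : 0 < α := hβ.trans_lt hαβ
    have hpci : pc i = 0 := (hdrop i hiS).1
    have hpri : pr i = 0 := (hdrop i hiS).2
    have hserk : pc k + pr k = pinv k := hserve k hkN hkS
    set m : ℝ := min (pr k) (pinv i) with hm
    have hm0 : 0 ≤ m := le_min (hpr0 k) (hpinv i hiN).le
    have hmi : m ≤ pinv i := min_le_right _ _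
    have hmk : m ≤ pr k := min_le_left _ _
    set qc : ℕ → ℝ := fun j => if j = k then 0 else if j = i then pinv i - m else pc j
      with hqc
    set qr : ℕ → ℝ := fun j => if j = k then 0 else if j = i then m else pr j with hqr
    set S' : Finset ℕ := insert k (S.erase i) with hS'
    have hiS' : i ∉ S' := by
      simp only [hS', Finset.mem_insert, Finset.mem_erase]
      push_neg
      exact ⟨hne.symm, fun h => absurd rfl h⟩
    -- generic sum splitting lemma
    have key : ∀ (f g : ℕ → ℝ) (a b : ℝ),
        (∀ j, f j = g j + (if j = k then a else 0) + (if j = i then b else 0)) →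
        ∀ n, ∑ j ∈ Finset.range n, f j = ∑ j ∈ Finset.range n, g j +
          (if k ∈ Finset.range n then a else 0) +
          (if i ∈ Finset.range n then b else 0) := by
      intro f g a b hfg n
      simp only [hfg, Finset.sum_add_distrib, Finset.sum_ite_eq']
    have hqr_split : ∀ j, qr j = pr j + (if j = k then -pr k else 0) +
        (if j = i then m else 0) := by
      intro j
      by_cases h1 : j = k
      · subst h1; simp [hqr, hne]
      · by_cases h2 : j = i
        · subst h2; simp [hqr, h1, hpri]
        · simp [hqr, h1, h2]
    have hcost_split : ∀ j, α * qc j + β * qr j = (α * pc j + β * pr j) +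
        (if j = k then -(α * pc k + β * pr k) else 0) +
        (if j = i then α * (pinv i - m) + β * m else 0) := by
      intro j
      by_cases h1 : j = k
      · subst h1; simp [hqc, hqr, hne]
      · by_cases h2 : j = i
        · have hv1 : qc j = pinv i - m := by simp [hqc, h2, Ne.symm hne]
          have hv2 : qr j = m := by simp [hqr, h2, Ne.symm hne]
          rw [hv1, hv2, h2, if_neg (Ne.symm hne), if_pos rfl, hpci, hpri]
          ring
        · simp [hqc, hqr, h1, h2]
    have hfeas' : DropSetFeasible N M pinv T S' qc qr := by
      refine ⟨?_, ?_, ?_, ?_, ?_, ?_, ?_⟩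
      · exact Finset.insert_subset (Finset.mem_range.mpr hkN)
          ((Finset.erase_subset _ _).trans hSsub)
      · have h1 : (S.erase i).card = S.card - 1 := Finset.card_erase_of_mem hiS
        have h2 : S'.card ≤ (S.erase i).card + 1 := Finset.card_insert_le _ _
        have h3 : 0 < S.card := Finset.card_pos.mpr ⟨i, hiS⟩
        omega
      · intro j
        by_cases h1 : j = k
        · simp [hqc, h1]
        · by_cases h2 : j = i
          · have hv : qc j = pinv i - m := by simp [hqc, h2, Ne.symm hne]
            rw [hv]; linarith
          · simpa [hqc, h1, h2] using hpc0 j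
      · intro j
        by_cases h1 : j = k
        · simp [hqr, h1]
        · by_cases h2 : j = i
          · have hv : qr j = m := by simp [hqr, h2, Ne.symm hne]
            rw [hv]; exact hm0
          · simpa [hqr, h1, h2] using hpr0 j
      · intro n hn
        rw [key qr pr (-pr k) m hqr_split n]
        by_cases hi' : i ∈ Finset.range n
        · have hk' : k ∈ Finset.range n := by
            rw [Finset.mem_range] at hi' ⊢; omega
          simp only [hi', hk', if_pos]
          have := hcum n hn
          linarith
        · simp only [hi', if_neg, not_false_iff]
          have := hcum n hn
          by_cases hk' : k ∈ Finset.range n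
          · simp only [hk', if_pos]
            have := hpr0 k
            linarith
          · simp only [hk', if_neg, not_false_iff]
            linarith
      · intro j hjN hjS'
        have h1 : j ≠ k := by
          intro h; exact hjS' (by simp [hS', h])
        by_cases h2 : j = i
        · subst h2; simp [hqc, hqr, h1]
        · have hjS : j ∉ S := by
            intro h; exact hjS' (by simp [hS', Finset.mem_erase, h2, h])
          simpa [hqc, hqr, h1, h2] using hserve j hjN hjS
      · intro j hj
        rw [hS', Finset.mem_insert] at hj
        rcases hj with h | h
        · simp [hqc, hqr, h]
        · rw [Finset.mem_erase] at h
          have h1 : j ≠ k := by rintro rfl; exact hkS h.2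
          have := hdrop j h.2
          simp [hqc, hqr, h1, h.1, this.1, this.2]
    -- new cost ≤ old cost
    have hprk : pr k ≤ pinv k := by linarith [hpc0 k]
    have hkey : α * (pinv i - m) + β * m ≤ α * pc k + β * pr k := by
      rcases le_total (pr k) (pinv i) with h | h
      · have hm' : m = pr k := min_eq_left h
        rw [hm']
        nlinarith
      · have hm' : m = pinv i := min_eq_right h
        rw [hm']
        have h1 : β * pinv i ≤ β * pr k := mul_le_mul_of_nonneg_left h hβ
        have h2 : 0 ≤ α * pc k := mul_nonneg hα.le (hpc0 k)
        linarith
    have hcost : ∑ j ∈ Finset.range N, (α * qc j + β * qr j) ≤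
        ∑ j ∈ Finset.range N, (α * pc j + β * pr j) := by
      rw [key _ _ _ _ hcost_split N]
      have hk' : k ∈ Finset.range N := Finset.mem_range.mpr hkN
      have hi' : i ∈ Finset.range N := Finset.mem_range.mpr hiN
      simp only [hk', hi', if_pos]
      linarith
    refine ⟨S', qc, qr, hfeas', ?_, hiS'⟩
    intro S'' rc rr hf
    exact hcost.trans (hopt S'' rc rr hf)
  · exact ⟨S, pc, pr, hfeas, hopt, hiS⟩
end

section
/- The minimal-cost value function is (α−β)-Lipschitz in the initial renewable-energy storage: for initial storage S ≥ 0 and increment Δ ≥ 0, V(S) − V(S+Δ) ≤ (α−β)Δ, where V(E) denotes the minimal total cost achievable when the cumulative harvesting constraints are ∑_{i=1}^k p_i^r ≤ E + ∑_{i=1}^k T_i. -/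
/-- A policy with initial renewable storage `E` selects at most `M` dropped slots (zero
power there), serves the remaining slots with channel inversion power, and satisfies the
cumulative harvesting constraints with initial storage `E`. -/
def StorageFeasible (N M : ℕ) (pinv T : ℕ → ℝ) (E : ℝ) (S : Finset ℕ)
    (pc pr : ℕ → ℝ) : Prop :=
  S ⊆ Finset.range N ∧ S.card ≤ M ∧
  (∀ j, 0 ≤ pc j) ∧ (∀ j, 0 ≤ pr j) ∧
  (∀ m ≤ N, ∑ j ∈ Finset.range m, pr j ≤ E + ∑ j ∈ Finset.range m, T j) ∧
  (∀ j < N, j ∉ S → pc j + pr j = pinv j) ∧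
  (∀ j ∈ S, pc j = 0 ∧ pr j = 0)

/-- The set of achievable total costs with initial storage `E`. -/
def CostSet (N M : ℕ) (pinv T : ℕ → ℝ) (α β : ℝ) (E : ℝ) : Set ℝ :=
  {v | ∃ S pc pr, StorageFeasible N M pinv T E S pc pr ∧
    v = ∑ i ∈ Finset.range N, (α * pc i + β * pr i)}

namespace StorageAux

/-- Cumulative amount of renewable power shifted to conventional by greedy reduction. -/
noncomputable def R (pr : ℕ → ℝ) (Δ : ℝ) : ℕ → ℝ
  | 0 => 0
  | j + 1 => R pr Δ j + min (pr j) (Δ - R pr Δ j)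

variable {pr : ℕ → ℝ} {Δ : ℝ}

lemma R_le (hΔ : 0 ≤ Δ) : ∀ j, R pr Δ j ≤ Δ := by
  intro j
  induction j with
  | zero => simpa [R]
  | succ j ih =>
      have : R pr Δ j + min (pr j) (Δ - R pr Δ j) ≤ R pr Δ j + (Δ - R pr Δ j) :=
        add_le_add_right (min_le_right _ _) _
      simpa [R] using this.trans (by ring_nf; exact le_refl Δ)

lemma step_nonneg (hpr : ∀ j, 0 ≤ pr j) (hΔ : 0 ≤ Δ) (j : ℕ) :
    0 ≤ min (pr j) (Δ - R pr Δ j) :=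
  le_min (hpr j) (by linarith [R_le (pr := pr) hΔ j])

lemma R_mono_step (hpr : ∀ j, 0 ≤ pr j) (hΔ : 0 ≤ Δ) (j : ℕ) :
    R pr Δ j ≤ R pr Δ (j + 1) := by
  have := step_nonneg hpr hΔ j
  simp only [R]; linarith

lemma R_nonneg (hpr : ∀ j, 0 ≤ pr j) (hΔ : 0 ≤ Δ) : ∀ j, 0 ≤ R pr Δ j := by
  intro j
  induction j with
  | zero => simp [R]
  | succ j ih => exact ih.trans (R_mono_step hpr hΔ j)

lemma R_step_le (hpr : ∀ j, 0 ≤ pr j) (hΔ : 0 ≤ Δ) (j : ℕ) :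
    R pr Δ (j + 1) - R pr Δ j ≤ pr j := by
  simp only [R]; have := min_le_left (pr j) (Δ - R pr Δ j); linarith

lemma R_telescope (m : ℕ) :
    ∑ j ∈ Finset.range m, (R pr Δ (j + 1) - R pr Δ j) = R pr Δ m := by
  rw [Finset.sum_range_sub]; simp [R]

lemma R_eq_of_lt (hpr : ∀ j, 0 ≤ pr j) (hΔ : 0 ≤ Δ) :
    ∀ m, R pr Δ m < Δ → R pr Δ m = ∑ j ∈ Finset.range m, pr j := by
  intro m
  induction m with
  | zero => simp [R]
  | succ m ih =>
      intro h
      have hm : R pr Δ m < Δ := lt_of_le_of_lt (R_mono_step hpr hΔ m) h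
      have hmin : min (pr m) (Δ - R pr Δ m) = pr m := by
        by_contra hne
        have : min (pr m) (Δ - R pr Δ m) = Δ - R pr Δ m := by
          rcases min_cases (pr m) (Δ - R pr Δ m) with ⟨h1, _⟩ | ⟨h1, _⟩
          · exact absurd h1 hne
          · exact h1
        have : R pr Δ (m + 1) = Δ := by simp only [R, this]; ring
        linarith
      rw [Finset.sum_range_succ, ← ih hm]
      simp only [R, hmin]

end StorageAux

open StorageAux in
/-- Key construction: from a policy feasible at storage `E + Δ`, build one feasible at
storage `E` whose cost exceeds the original by at most `(α - β) * Δ`. -/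
lemma costset_shift (N M : ℕ) (α β : ℝ) (hβ : 0 ≤ β) (hαβ : β ≤ α)
    (pinv T : ℕ → ℝ) (hT : ∀ j, 0 ≤ T j)
    (E Δ : ℝ) (hE : 0 ≤ E) (hΔ : 0 ≤ Δ)
    (v : ℝ) (hv : v ∈ CostSet N M pinv T α β (E + Δ)) :
    ∃ w ∈ CostSet N M pinv T α β E, w ≤ v + (α - β) * Δ := by
  obtain ⟨Sd, pc, pr, ⟨hsub, hcard, hpc, hpr, hcum, hserve, hdrop⟩, hveq⟩ := hv
  set r : ℕ → ℝ := fun j => R pr Δ (j + 1) - R pr Δ j with hr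
  have hr_nonneg : ∀ j, 0 ≤ r j := fun j => by
    have := R_mono_step hpr hΔ j; simp [hr]; linarith
  have hr_le : ∀ j, r j ≤ pr j := fun j => R_step_le hpr hΔ j
  refine ⟨∑ i ∈ Finset.range N, (α * (pc i + r i) + β * (pr i - r i)),
    ⟨Sd, fun j => pc j + r j, fun j => pr j - r j,
      ⟨hsub, hcard, fun j => add_nonneg (hpc j) (hr_nonneg j),
        fun j => by show (0:ℝ) ≤ pr j - r j; linarith [hr_le j, hr_nonneg j],
        ?_, ?_, ?_⟩, rfl⟩, ?_⟩
  · -- cumulative constraint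
    intro m hm
    have hsum : ∑ j ∈ Finset.range m, (pr j - r j)
        = (∑ j ∈ Finset.range m, pr j) - R pr Δ m := by
      rw [Finset.sum_sub_distrib, R_telescope]
    rw [hsum]
    rcases lt_or_ge (R pr Δ m) Δ with hlt | hge
    · rw [R_eq_of_lt hpr hΔ m hlt]
      have : (0:ℝ) ≤ ∑ j ∈ Finset.range m, T j :=
        Finset.sum_nonneg fun j _ => hT j
      linarith
    · have := hcum m hm
      have hRle := R_le (pr := pr) hΔ m
      have : R pr Δ m = Δ := le_antisymm hRle hge
      linarith
  · -- serving constraint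
    intro j hj hjS
    have := hserve j hj hjS
    show pc j + r j + (pr j - r j) = pinv j
    linarith
  · -- dropped slots
    intro j hj
    obtain ⟨h1, h2⟩ := hdrop j hj
    have h3 : r j ≤ pr j := hr_le j
    have h4 : 0 ≤ r j := hr_nonneg j
    exact ⟨show pc j + r j = 0 by linarith, show pr j - r j = 0 by linarith⟩
  · -- cost bound
    have hcost : ∑ i ∈ Finset.range N, (α * (pc i + r i) + β * (pr i - r i))
        = (∑ i ∈ Finset.range N, (α * pc i + β * pr i)) + (α - β) * R pr Δ N := by
      rw [← R_telescope (pr := pr) (Δ := Δ) N, Finset.mul_sum, ← Finset.sum_add_distrib]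
      exact Finset.sum_congr rfl fun i _ => by simp [hr]; ring
    rw [hcost, hveq]
    have := R_le (pr := pr) hΔ N
    have := R_nonneg hpr hΔ N
    nlinarith

lemma costset_nonempty (N M : ℕ) (pinv T : ℕ → ℝ) (α β E : ℝ)
    (hpinv : ∀ j, 0 ≤ pinv j) (hT : ∀ j, 0 ≤ T j) (hE : 0 ≤ E) :
    (CostSet N M pinv T α β E).Nonempty := by
  refine ⟨_, ∅, pinv, fun _ => 0,
    ⟨Finset.empty_subset _, by simp, hpinv, fun _ => le_refl 0, ?_, by simp, by simp⟩, rfl⟩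
  intro m hm
  have : (0:ℝ) ≤ ∑ j ∈ Finset.range m, T j := Finset.sum_nonneg fun j _ => hT j
  simp; linarith

lemma costset_bddBelow (N M : ℕ) (pinv T : ℕ → ℝ) (α β E : ℝ)
    (hα : 0 ≤ α) (hβ : 0 ≤ β) :
    BddBelow (CostSet N M pinv T α β E) := by
  refine ⟨0, fun v hv => ?_⟩
  obtain ⟨Sd, pc, pr, ⟨_, _, hpc, hpr, _, _, _⟩, hveq⟩ := hv
  rw [hveq]
  exact Finset.sum_nonneg fun i _ =>
    add_nonneg (mul_nonneg hα (hpc i)) (mul_nonneg hβ (hpr i))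

/-- The value function is `(α − β)`-Lipschitz in the initial storage:
`V(S) − V(S+Δ) ≤ (α − β)Δ`. -/
theorem value_function_lipschitz_in_storage (N M : ℕ) (hN : 0 < N)
    (α β : ℝ) (hβ : 0 ≤ β) (hαβ : β < α)
    (pinv T : ℕ → ℝ) (hpinv : ∀ j, 0 ≤ pinv j) (hT : ∀ j, 0 ≤ T j)
    (S Δ : ℝ) (hS : 0 ≤ S) (hΔ : 0 ≤ Δ) :
    sInf (CostSet N M pinv T α β S) - sInf (CostSet N M pinv T α β (S + Δ)) ≤
      (α - β) * Δ := by
  have hα : 0 ≤ α := hβ.trans hαβ.le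
  have hne : (CostSet N M pinv T α β (S + Δ)).Nonempty :=
    costset_nonempty N M pinv T α β (S + Δ) hpinv hT (by linarith)
  rw [sub_le_iff_le_add, add_comm]
  have key : ∀ v ∈ CostSet N M pinv T α β (S + Δ),
      sInf (CostSet N M pinv T α β S) ≤ v + (α - β) * Δ := by
    intro v hv
    obtain ⟨w, hw, hwle⟩ :=
      costset_shift N M α β hβ hαβ.le pinv T hT S Δ hS hΔ v hv
    exact (csInf_le (costset_bddBelow N M pinv T α β S hα hβ) hw).trans hwle
  have : sInf (CostSet N M pinv T α β S) - (α - β) * Δ ≤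
      sInf (CostSet N M pinv T α β (S + Δ)) :=
    le_csInf hne fun v hv => by linarith [key v hv]
  linarith
end

section
/- In the multi-cycle problem with M cycles of N slots each, where at most K outage slots are allowed per cycle, any optimal solution uses exactly K outage slots in every cycle, provided K ≥ 1, all channel inversion powers are strictly positive, and α > β > 0. -/
open scoped Classical

/-- In the multi-cycle problem with `M` cycles of `N` slots and at most `K` outage slots
allowed per cycle, any optimal solution uses exactly `K` outage slots in every cycle. -/
theorem multicycle_optimal_uses_full_outage_budget (M N K : ℕ) (hM : 0 < M) (hN : 0 < N)
    (hK1 : 1 ≤ K) (hKN : K ≤ N)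
    (α β : ℝ) (hβ : 0 < β) (hαβ : β < α)
    (pinv T : ℕ → ℝ) (hpinv : ∀ i < M * N, 0 < pinv i) (hT : ∀ i, 0 ≤ T i)
    (pc pr : ℕ → ℝ)
    (hpc : ∀ i, 0 ≤ pc i) (hpr : ∀ i, 0 ≤ pr i)
    (hcum : ∀ k ≤ M * N, ∑ i ∈ Finset.range k, pr i ≤ ∑ i ∈ Finset.range k, T i)
    (hout : ∀ j < M,
      ((Finset.Ico (j * N) (j * N + N)).filter (fun i => pc i + pr i < pinv i)).card ≤ K)
    (hopt : ∀ qc qr : ℕ → ℝ, (∀ i, 0 ≤ qc i) → (∀ i, 0 ≤ qr i) →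
      (∀ k ≤ M * N, ∑ i ∈ Finset.range k, qr i ≤ ∑ i ∈ Finset.range k, T i) →
      (∀ j < M, ((Finset.Ico (j * N) (j * N + N)).filter
          (fun i => qc i + qr i < pinv i)).card ≤ K) →
      ∑ i ∈ Finset.range (M * N), (α * pc i + β * pr i) ≤
        ∑ i ∈ Finset.range (M * N), (α * qc i + β * qr i)) :
    ∀ j < M,
      ((Finset.Ico (j * N) (j * N + N)).filter
        (fun i => pc i + pr i < pinv i)).card = K := by
  intro j hj
  by_contra hne
  set S := (Finset.Ico (j * N) (j * N + N)).filter (fun i => pc i + pr i < pinv i) with hS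
  have hlt : S.card < K := lt_of_le_of_ne (hout j hj) hne
  obtain ⟨i, hiI, hiS⟩ : ∃ i ∈ Finset.Ico (j * N) (j * N + N), i ∉ S := by
    by_contra h
    push_neg at h
    have hsub : Finset.Ico (j * N) (j * N + N) ⊆ S := h
    have := Finset.card_le_card hsub
    rw [Nat.card_Ico] at this
    omega
  rw [Finset.mem_Ico] at hiI
  have hiMN : i < M * N := by nlinarith [hiI.1, hiI.2]
  have hno : ¬(pc i + pr i < pinv i) := by
    intro hc
    exact hiS (Finset.mem_filter.mpr ⟨Finset.mem_Ico.mpr hiI, hc⟩)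
  push_neg at hno
  have hipos : 0 < pc i + pr i := lt_of_lt_of_le (hpinv i hiMN) hno
  set qc : ℕ → ℝ := fun x => if x = i then 0 else pc x with hqc
  set qr : ℕ → ℝ := fun x => if x = i then 0 else pr x with hqr
  have hqc0 : ∀ x, 0 ≤ qc x := by
    intro x; simp only [hqc]; split <;> [rfl; exact hpc x]
  have hqr0 : ∀ x, 0 ≤ qr x := by
    intro x; simp only [hqr]; split <;> [rfl; exact hpr x]
  have hqcum : ∀ k ≤ M * N, ∑ x ∈ Finset.range k, qr x ≤ ∑ x ∈ Finset.range k, T x := by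
    intro k hk
    refine le_trans ?_ (hcum k hk)
    refine Finset.sum_le_sum fun x _ => ?_
    simp only [hqr]; split <;> [exact hpr x; rfl]
  have hqout : ∀ j' < M, ((Finset.Ico (j' * N) (j' * N + N)).filter
      (fun x => qc x + qr x < pinv x)).card ≤ K := by
    intro j' hj'
    by_cases hjj : j' = j
    · subst hjj
      have hsub : (Finset.Ico (j' * N) (j' * N + N)).filter
          (fun x => qc x + qr x < pinv x) ⊆ insert i S := by
        intro x hx
        rw [Finset.mem_filter] at hx
        by_cases hxi : x = i
        · exact Finset.mem_insert.mpr (Or.inl hxi)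
        · refine Finset.mem_insert.mpr (Or.inr (Finset.mem_filter.mpr ⟨hx.1, ?_⟩))
          have : qc x + qr x = pc x + pr x := by simp [hqc, hqr, hxi]
          linarith [hx.2, this.symm.le, this.le]
      calc ((Finset.Ico (j' * N) (j' * N + N)).filter
          (fun x => qc x + qr x < pinv x)).card ≤ (insert i S).card :=
            Finset.card_le_card hsub
        _ ≤ S.card + 1 := Finset.card_insert_le _ _
        _ ≤ K := by omega
    · have heq : (Finset.Ico (j' * N) (j' * N + N)).filter (fun x => qc x + qr x < pinv x)
          = (Finset.Ico (j' * N) (j' * N + N)).filter (fun x => pc x + pr x < pinv x) := by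
        apply Finset.filter_congr
        intro x hx
        rw [Finset.mem_Ico] at hx
        have hxi : x ≠ i := by
          rcases lt_or_gt_of_ne hjj with h | h
          · have h1 : (j' + 1) * N ≤ j * N := Nat.mul_le_mul_right N h
            have h2 : (j' + 1) * N = j' * N + N := by ring
            omega
          · have h1 : (j + 1) * N ≤ j' * N := Nat.mul_le_mul_right N h
            have h2 : (j + 1) * N = j * N + N := by ring
            omega
        simp [hqc, hqr, hxi]
      rw [heq]
      exact hout j' hj'
  have hle := hopt qc qr hqc0 hqr0 hqcum hqout
  have hstrict : ∑ x ∈ Finset.range (M * N), (α * qc x + β * qr x)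
      < ∑ x ∈ Finset.range (M * N), (α * pc x + β * pr x) := by
    apply Finset.sum_lt_sum
    · intro x _
      by_cases hxi : x = i
      · subst hxi
        simp only [hqc, hqr, if_pos rfl]
        have := hpc x; have := hpr x
        nlinarith
      · simp [hqc, hqr, hxi]
    · refine ⟨i, Finset.mem_range.mpr hiMN, ?_⟩
      simp only [hqc, hqr, if_pos rfl]
      have := hpc i; have := hpr i
      nlinarith
  linarith
end

section
/- The pointwise-threshold policy p_i^c + p_i^r = N_0(e^R − 1)/F^{-1}(ε) for every slot, with the renewable part chosen greedily (p_k^r = min{N_0(e^R−1)/F^{-1}(ε), ∑_{i=1}^k T_i − ∑_{i=1}^{k−1} p_i^r} and p_k^c the remainder), is optimal for the per-slot outage-probability-constrained cost minimization problem. -/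
open MeasureTheory

/-- The pointwise-threshold policy `p_i^c + p_i^r = N₀(e^R − 1)/F⁻¹(ε)` with the
renewable part chosen greedily is optimal for the per-slot
outage-probability-constrained cost minimization problem. -/
theorem threshold_greedy_policy_optimal {Ω : Type*} [MeasurableSpace Ω]
    (μ : Measure Ω) [IsProbabilityMeasure μ]
    (g : Ω → ℝ) (hg : ∀ ω, 0 < g ω)
    (F : ℝ → ℝ)
    (hF : ∀ t, 0 < t → (μ {ω | g ω < t}).toReal = F t)
    (hFmono : StrictMonoOn F (Set.Ioi (0 : ℝ)))
    (N0 R ε : ℝ) (hN0 : 0 < N0) (hR : 0 < R) (hε : ε ∈ Set.Ioo (0 : ℝ) 1)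
    (Finv : ℝ) (hFinv : 0 < Finv) (hFval : F Finv = ε)
    (N : ℕ) (hN : 0 < N) (α β : ℝ) (hβ : 0 ≤ β) (hαβ : β < α)
    (T : ℕ → ℝ) (hT : ∀ i, 0 ≤ T i)
    (pr : ℕ → ℝ)
    (hpr : ∀ i, pr i = min (N0 * (Real.exp R - 1) / Finv)
      ((∑ j ∈ Finset.range (i+1), T j) - ∑ j ∈ Finset.range i, pr j))
    (pc : ℕ → ℝ)
    (hpc : ∀ i, pc i = N0 * (Real.exp R - 1) / Finv - pr i) :
    ((∀ i, 0 ≤ pc i) ∧ (∀ i, 0 ≤ pr i) ∧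
      (∀ k ≤ N, ∑ j ∈ Finset.range k, pr j ≤ ∑ j ∈ Finset.range k, T j) ∧
      (∀ i < N,
        (μ {ω | Real.log (1 + g ω * (pc i + pr i) / N0) < R}).toReal ≤ ε)) ∧
    ∀ qc qr : ℕ → ℝ, (∀ i, 0 ≤ qc i) → (∀ i, 0 ≤ qr i) →
      (∀ k ≤ N, ∑ j ∈ Finset.range k, qr j ≤ ∑ j ∈ Finset.range k, T j) →
      (∀ i < N,
        (μ {ω | Real.log (1 + g ω * (qc i + qr i) / N0) < R}).toReal ≤ ε) →
      ∑ i ∈ Finset.range N, (α * pc i + β * pr i) ≤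
        ∑ i ∈ Finset.range N, (α * qc i + β * qr i) := by
  have hexp : (0:ℝ) < Real.exp R - 1 := by
    have := Real.one_lt_exp_iff.mpr hR; linarith
  set P : ℝ := N0 * (Real.exp R - 1) / Finv with hPdef
  have hP : 0 < P := div_pos (mul_pos hN0 hexp) hFinv
  -- the measure of the outage set for a total power s
  have hmeas : ∀ s : ℝ, 0 < s →
      (μ {ω | Real.log (1 + g ω * s / N0) < R}).toReal
        = F (N0 * (Real.exp R - 1) / s) := by
    intro s hs
    have hset : {ω | Real.log (1 + g ω * s / N0) < R}
        = {ω | g ω < N0 * (Real.exp R - 1) / s} := by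
      ext ω
      have hgω := hg ω
      have hx : (0:ℝ) < 1 + g ω * s / N0 := by positivity
      simp only [Set.mem_setOf_eq]
      rw [Real.log_lt_iff_lt_exp hx, lt_div_iff₀ hs, add_comm, ← lt_sub_iff_add_lt,
        div_lt_iff₀ hN0]
      constructor <;> intro h <;> nlinarith
    rw [hset, hF _ (div_pos (mul_pos hN0 hexp) hs)]
  have hmeasP : (μ {ω | Real.log (1 + g ω * P / N0) < R}).toReal = ε := by
    rw [hmeas P hP]
    have : N0 * (Real.exp R - 1) / P = Finv := by
      rw [hPdef]; field_simp
    rw [this, hFval]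
  -- feasibility of any policy forces total power ≥ P
  have hforce : ∀ s : ℝ, 0 ≤ s →
      (μ {ω | Real.log (1 + g ω * s / N0) < R}).toReal ≤ ε → P ≤ s := by
    intro s hs hcon
    rcases eq_or_lt_of_le hs with hs0 | hs0
    · exfalso
      have hset : {ω | Real.log (1 + g ω * s / N0) < R} = Set.univ := by
        ext ω; simp only [Set.mem_setOf_eq, Set.mem_univ, iff_true]
        rw [← hs0]; simpa using hR
      rw [hset] at hcon
      simp [measure_univ] at hcon
      exact absurd (lt_of_lt_of_le hε.2 hcon) (lt_irrefl _)
    · rw [hmeas s hs0] at hcon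
      by_contra hlt
      push_neg at hlt
      have ht : Finv < N0 * (Real.exp R - 1) / s := by
        rw [lt_div_iff₀ hs0]
        have : s * Finv < P * Finv := by
          exact mul_lt_mul_of_pos_right hlt hFinv
        calc Finv * s = s * Finv := mul_comm _ _
          _ < P * Finv := this
          _ = N0 * (Real.exp R - 1) := by rw [hPdef]; field_simp
      have := hFmono (Set.mem_Ioi.mpr hFinv)
        (Set.mem_Ioi.mpr (div_pos (mul_pos hN0 hexp) hs0)) ht
      rw [hFval] at this
      linarith
  -- basic properties of the greedy policy
  have hST : ∀ k, ∑ j ∈ Finset.range k, pr j ≤ ∑ j ∈ Finset.range k, T j := by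
    intro k
    induction k with
    | zero => simp
    | succ k ih =>
      rw [Finset.sum_range_succ, hpr k]
      have : pr k ≤ (∑ j ∈ Finset.range (k+1), T j) - ∑ j ∈ Finset.range k, pr j := by
        rw [hpr k]; exact min_le_right _ _
      rw [← hpr k]
      linarith
  have hprnn : ∀ i, 0 ≤ pr i := by
    intro i
    rw [hpr i]
    refine le_min (le_of_lt hP) ?_
    have h1 := hST i
    have h2 : ∑ j ∈ Finset.range i, T j ≤ ∑ j ∈ Finset.range (i+1), T j := by
      rw [Finset.sum_range_succ]; linarith [hT i]
    linarith
  have hprle : ∀ i, pr i ≤ P := fun i => by rw [hpr i]; exact min_le_left _ _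
  have hpcnn : ∀ i, 0 ≤ pc i := fun i => by rw [hpc i]; linarith [hprle i]
  have hsum : ∀ i, pc i + pr i = P := fun i => by rw [hpc i]; ring
  -- greedy maximizes the cumulative renewable usage
  have hgreedy : ∀ q : ℕ → ℝ, (∀ i, 0 ≤ q i) → (∀ i, q i ≤ P) →
      (∀ k ≤ N, ∑ j ∈ Finset.range k, q j ≤ ∑ j ∈ Finset.range k, T j) →
      ∀ k ≤ N, ∑ j ∈ Finset.range k, q j ≤ ∑ j ∈ Finset.range k, pr j := by
    intro q hqnn hqle hqT k
    induction k with
    | zero => simp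
    | succ k ih =>
      intro hkN
      have ihk := ih (Nat.le_of_succ_le hkN)
      rw [Finset.sum_range_succ, Finset.sum_range_succ, hpr k]
      have hmin : (∑ j ∈ Finset.range k, pr j) +
          min P ((∑ j ∈ Finset.range (k+1), T j) - ∑ j ∈ Finset.range k, pr j)
          = min ((∑ j ∈ Finset.range k, pr j) + P) (∑ j ∈ Finset.range (k+1), T j) := by
        rw [← min_add_add_left]; ring_nf
      rw [hmin]
      refine le_min ?_ ?_
      · linarith [hqle k]
      · have := hqT (k+1) hkN
        rw [Finset.sum_range_succ] at this
        linarith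
  refine ⟨⟨hpcnn, hprnn, fun k _ => hST k, fun i _ => by rw [hsum i, hmeasP]⟩, ?_⟩
  intro qc qr hqcnn hqrnn hqT hqcon
  -- each total power qc i + qr i ≥ P for i < N
  have hqP : ∀ i < N, P ≤ qc i + qr i := fun i hi =>
    hforce _ (by linarith [hqcnn i, hqrnn i]) (hqcon i hi)
  set q' : ℕ → ℝ := fun i => min (qr i) P with hq'
  have hq'nn : ∀ i, 0 ≤ q' i := fun i => le_min (hqrnn i) (le_of_lt hP)
  have hq'le : ∀ i, q' i ≤ P := fun i => min_le_right _ _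
  have hq'T : ∀ k ≤ N, ∑ j ∈ Finset.range k, q' j ≤ ∑ j ∈ Finset.range k, T j := by
    intro k hk
    calc ∑ j ∈ Finset.range k, q' j ≤ ∑ j ∈ Finset.range k, qr j :=
          Finset.sum_le_sum fun j _ => min_le_left _ _
      _ ≤ _ := hqT k hk
  have hq'sum := hgreedy q' hq'nn hq'le hq'T N le_rfl
  -- per-slot cost lower bound
  have hslot : ∀ i < N, α * P - (α - β) * q' i ≤ α * qc i + β * qr i := by
    intro i hi
    have hPi := hqP i hi
    rcases le_or_gt (qr i) P with h | h
    · have : q' i = qr i := min_eq_left h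
      rw [this]
      have hqc : P - qr i ≤ qc i := by linarith
      nlinarith [hqcnn i, hqrnn i]
    · have : q' i = P := min_eq_right (le_of_lt h)
      rw [this]
      nlinarith [hqcnn i, hqrnn i]
  calc ∑ i ∈ Finset.range N, (α * pc i + β * pr i)
      = ∑ i ∈ Finset.range N, (α * P - (α - β) * pr i) :=
        Finset.sum_congr rfl fun i _ => by rw [hpc i]; ring
    _ ≤ ∑ i ∈ Finset.range N, (α * P - (α - β) * q' i) := by
        have e1 : ∑ x ∈ Finset.range N, (α - β) * q' x
            = (α - β) * ∑ x ∈ Finset.range N, q' x := by rw [Finset.mul_sum]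
        have e2 : ∑ x ∈ Finset.range N, (α - β) * pr x
            = (α - β) * ∑ x ∈ Finset.range N, pr x := by rw [Finset.mul_sum]
        rw [Finset.sum_sub_distrib, Finset.sum_sub_distrib, e1, e2]
        have := mul_le_mul_of_nonneg_left hq'sum (by linarith : (0:ℝ) ≤ α - β)
        linarith
    _ ≤ ∑ i ∈ Finset.range N, (α * qc i + β * qr i) :=
        Finset.sum_le_sum fun i hi => hslot i (Finset.mem_range.mp hi)
end

section
/- Under the greedy power allocation for a fixed served set, either every served slot uses only renewable energy (p_i^c = 0 for all served i), or all harvested energy available up to the last slot where conventional energy is used has been exhausted; formally, if p_k^c > 0 for some served slot k under greedy allocation, then ∑_{i=1}^k p_i^r = ∑_{i=1}^k T_i. -/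
/-- Under the greedy allocation, if some slot uses conventional energy, then all the
harvested energy available up to that slot has been exhausted. -/
theorem greedy_conventional_implies_harvest_exhausted (N : ℕ)
    (q T : ℕ → ℝ) (hq : ∀ i, 0 ≤ q i) (hT : ∀ i, 0 ≤ T i)
    (pr : ℕ → ℝ)
    (hpr : ∀ i, pr i = min (q i)
      ((∑ j ∈ Finset.range (i+1), T j) - ∑ j ∈ Finset.range i, pr j))
    (pc : ℕ → ℝ) (hpc : ∀ i, pc i = q i - pr i)
    (k : ℕ) (hk : k < N) (hconv : 0 < pc k) :
    ∑ i ∈ Finset.range (k+1), pr i = ∑ i ∈ Finset.range (k+1), T i := by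
  have h1 : pr k < q k := by
    have := hpc k; linarith
  have h2 : pr k = (∑ j ∈ Finset.range (k+1), T j) - ∑ j ∈ Finset.range k, pr j := by
    have := hpr k
    rcases min_cases (q k) ((∑ j ∈ Finset.range (k+1), T j) - ∑ j ∈ Finset.range k, pr j) with
      ⟨h, _⟩ | ⟨h, _⟩
    · rw [h] at this; linarith
    · rw [h] at this; exact this
  rw [Finset.sum_range_succ (f := pr)]
  linarith
end

section
/- For the cumulative-constraint linear program with objective α∑c_i − (α−β)∑x_i, the KKT multipliers constructed as follows certify optimality of the greedy policy: with K the largest index at which the cumulative constraint is tight under the greedy policy (K = 0 if none), set μ_K = α−β and μ_i = 0 for i ≠ K, λ_i = α−β for i > K and λ_i = 0 for i ≤ K, γ_i = 0 for all i; then stationarity −(α−β) + λ_i + ∑_{j=i}^N μ_j − γ_i = 0, complementary slackness λ_i(x_i* − c_i) = 0 and μ_i(∑_{j≤i} x_j* − ∑_{j≤i} T_j) = 0, and dual feasibility λ_i, μ_i, γ_i ≥ 0 all hold. -/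
open scoped Classical

/-- The explicitly constructed KKT multipliers certify optimality of the greedy policy:
stationarity, complementary slackness, and dual feasibility all hold.  Here slot `i`
(0-indexed) corresponds to slot `i+1` of the paper, and `K ∈ {0,…,N}` is the largest
index such that the cumulative constraint `∑_{j<K} x_j* = ∑_{j<K} T_j` is tight. -/
theorem greedy_KKT_multipliers (N : ℕ) (hN : 0 < N) (α β : ℝ) (hαβ : β ≤ α)
    (c T : ℕ → ℝ) (hc : ∀ i, 0 ≤ c i) (hT : ∀ i, 0 ≤ T i)
    (xs : ℕ → ℝ)
    (hxs : ∀ i, xs i = min (c i)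
      ((∑ j ∈ Finset.range (i+1), T j) - ∑ j ∈ Finset.range i, xs j))
    (K : ℕ) (hKN : K ≤ N)
    (hKtight : ∑ j ∈ Finset.range K, xs j = ∑ j ∈ Finset.range K, T j)
    (hKmax : ∀ m ≤ N, K < m →
      ∑ j ∈ Finset.range m, xs j ≠ ∑ j ∈ Finset.range m, T j)
    (lam mu gam : ℕ → ℝ)
    (hlam : ∀ i, lam i = if K ≤ i then α - β else 0)
    (hmu : ∀ i, mu i = if i + 1 = K then α - β else 0)
    (hgam : ∀ i, gam i = 0) :
    ∀ i < N,
      (-(α - β) + lam i + (∑ j ∈ Finset.Ico i N, mu j) - gam i = 0) ∧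
      (lam i * (xs i - c i) = 0) ∧
      (mu i * ((∑ j ∈ Finset.range (i+1), xs j) - ∑ j ∈ Finset.range (i+1), T j) = 0) ∧
      (gam i * xs i = 0) ∧
      (0 ≤ lam i ∧ 0 ≤ mu i ∧ 0 ≤ gam i) := by
  intro i hiN
  have hαβ' : 0 ≤ α - β := sub_nonneg.mpr hαβ
  refine ⟨?_, ?_, ?_, ?_, ?_, ?_, ?_⟩
  · -- stationarity
    have hsum : ∑ j ∈ Finset.Ico i N, mu j = if i < K then α - β else 0 := by
      by_cases hiK : i < K
      · rw [if_pos hiK]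
        rw [Finset.sum_eq_single (K - 1)]
        · rw [hmu, if_pos (by omega)]
        · intro b _ hb; rw [hmu, if_neg (by omega)]
        · intro h; exact absurd (Finset.mem_Ico.mpr (by omega)) h
      · rw [if_neg hiK]
        refine Finset.sum_eq_zero fun j hj => ?_
        rw [Finset.mem_Ico] at hj
        rw [hmu, if_neg (by omega)]
    rw [hsum, hlam, hgam]
    by_cases hiK : K ≤ i
    · rw [if_pos hiK, if_neg (by omega)]; ring
    · rw [if_neg hiK, if_pos (by omega)]; ring
  · -- λ complementary slackness
    by_cases hiK : K ≤ i
    · have hxc : xs i = c i := by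
        rcases min_cases (c i)
            ((∑ j ∈ Finset.range (i+1), T j) - ∑ j ∈ Finset.range i, xs j) with
          ⟨h1, _⟩ | ⟨h1, _⟩
        · rw [hxs i, h1]
        · exfalso
          apply hKmax (i + 1) (by omega) (by omega)
          rw [Finset.sum_range_succ, hxs i, h1]
          ring
      rw [hxc]; ring
    · rw [hlam, if_neg hiK]; ring
  · -- μ complementary slackness
    by_cases hiK : i + 1 = K
    · rw [hiK, hKtight]; ring
    · rw [hmu, if_neg hiK]; ring
  · rw [hgam]; ring
  · rw [hlam]; split <;> simp [hαβ']
  · rw [hmu]; split <;> simp [hαβ']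
  · rw [hgam]
end
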